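/- Mittag-Leffler expansion of the hyperbolic tangent: for every real z, tanh z = 8z · ∑_{n=1}^∞ 1/(4z² + (2n-1)²π²). -/

import Mathlib

open Real

section Helpers

open Complex MeasureTheory Set intervalIntegral

noncomputable section

namespace TanhML


/-- Fourier coefficient of `x ↦ cosh (A (x - 1/2))` on `[0,1]`. -/
lemma fourierCoeff_cosh (A : ℝ) (hA : A ≠ 0) (n : ℤ) :
    fourierCoeffOn (by norm_num : (0:ℝ) < 0 + 1)
        (fun x => (Real.cosh (A * (x - 1/2)) : ℂ)) n
      = ((2 * A * Real.sinh (A / 2) / (A ^ 2 + 4 * π ^ 2 * (n:ℝ) ^ 2) : ℝ) : ℂ) := by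
  obtain ⟨w, hw_def⟩ : ∃ w : ℂ, w = 2 * (π:ℂ) * Complex.I * (n:ℂ) := ⟨_, rfl⟩
  have hc1 : ((A : ℂ) - w) ≠ 0 := by
    intro h
    have := congrArg Complex.re h
    simp [hw_def, Complex.ext_iff] at this
    exact hA this
  have hc2 : (-(A : ℂ) - w) ≠ 0 := by
    intro h
    have := congrArg Complex.re h
    simp [hw_def, Complex.ext_iff] at this
    exact hA this
  have hexp_w : Complex.exp w = 1 := by
    rw [show w = (n : ℤ) * (2 * (π:ℂ) * Complex.I) by push_cast [hw_def]; ring]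
    exact Complex.exp_int_mul_two_pi_mul_I _
  -- the integrand
  have h1 : ∀ x : ℝ, (fourier (-n) (x : AddCircle (0 + 1 - 0 : ℝ))) • (Real.cosh (A * (x - 1/2)) : ℂ)
      = (Complex.exp (-((A:ℂ)/2)) * Complex.exp (((A:ℂ) - w) * x)
         + Complex.exp ((A:ℂ)/2) * Complex.exp ((-(A:ℂ) - w) * x)) / 2 := by
    intro x
    rw [smul_eq_mul, fourier_coe_apply, Complex.ofReal_cosh, Complex.cosh, mul_comm,
      div_mul_eq_mul_div, add_mul, ← Complex.exp_add, ← Complex.exp_add,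
      ← Complex.exp_add, ← Complex.exp_add]
    congr 3 <;> (push_cast [hw_def]; norm_num; ring)
  have hi1 : IntervalIntegrable (fun x : ℝ => Complex.exp (((A:ℂ) - w) * x)) volume 0 1 :=
    (Complex.continuous_exp.comp (continuous_const.mul Complex.continuous_ofReal)).intervalIntegrable _ _
  have hi2 : IntervalIntegrable (fun x : ℝ => Complex.exp ((-(A:ℂ) - w) * x)) volume 0 1 :=
    (Complex.continuous_exp.comp (continuous_const.mul Complex.continuous_ofReal)).intervalIntegrable _ _
  rw [fourierCoeffOn_eq_integral]
  simp_rw [h1]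
  rw [intervalIntegral.integral_div]
  norm_num
  rw [intervalIntegral.integral_add ((hi1.const_mul _)) (hi2.const_mul _),
    intervalIntegral.integral_const_mul, intervalIntegral.integral_const_mul,
    integral_exp_mul_complex hc1, integral_exp_mul_complex hc2]
  have hs : Complex.exp ((A:ℂ)/2) ≠ 0 := Complex.exp_ne_zero _
  have e0 : Complex.exp (-((A:ℂ)/2)) = (Complex.exp ((A:ℂ)/2))⁻¹ := Complex.exp_neg _
  have e1 : Complex.exp ((A:ℂ) - w) = Complex.exp ((A:ℂ)/2) * Complex.exp ((A:ℂ)/2) := by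
    rw [Complex.exp_sub, hexp_w, div_one, ← Complex.exp_add]
    congr 1
    ring
  have e2 : Complex.exp (-(A:ℂ) - w)
      = (Complex.exp ((A:ℂ)/2))⁻¹ * (Complex.exp ((A:ℂ)/2))⁻¹ := by
    rw [Complex.exp_sub, hexp_w, div_one, ← e0, ← Complex.exp_add]
    congr 1
    ring
  have e3 : Complex.sinh ((A:ℂ)/2) = (Complex.exp ((A:ℂ)/2) - (Complex.exp ((A:ℂ)/2))⁻¹) / 2 := by
    rw [Complex.sinh, Complex.exp_neg]
  have hd : ((A:ℂ) ^ 2 + 4 * (π:ℂ) ^ 2 * (n:ℂ) ^ 2) = -(((A:ℂ) - w) * (-(A:ℂ) - w)) := by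
    rw [hw_def]
    linear_combination (4 * (π:ℂ)^2 * (n:ℂ)^2) * Complex.I_sq
  simp only [Complex.ofReal_one, Complex.ofReal_zero, mul_one, mul_zero, Complex.exp_zero]
  rw [e0, e1, e2]
  push_cast
  have hprod : -(((A:ℂ) - w) * (-(A:ℂ) - w)) ≠ 0 := by
    simpa using mul_ne_zero hc1 hc2
  rw [e3, hd, eq_div_iff hprod, ← mul_div_assoc, ← mul_div_assoc,
    div_add_div _ _ hc1 hc2, div_div, div_mul_eq_mul_div,
    div_eq_iff (mul_ne_zero (mul_ne_zero hc1 hc2) two_ne_zero)]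
  field_simp
  ring



lemma summable_aux (b c : ℝ) (hb : 0 < b) (hc : 0 < c) :
    Summable (fun n : ℤ => 1 / (b + c * (n:ℝ) ^ 2)) := by
  refine Summable.of_norm_bounded_eventually (g := fun n : ℤ => (1/c) * (1 / (n:ℝ) ^ 2)) ?_ ?_
  · exact ((Real.summable_one_div_int_pow).mpr one_lt_two).mul_left _
  · refine Filter.mem_of_superset (Filter.eventually_cofinite_ne (0:ℤ)) ?_
    intro n hn
    have hn' : (0:ℝ) < (n:ℝ)^2 := by
      have : (n:ℝ) ≠ 0 := Int.cast_ne_zero.mpr hn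
      positivity
    have h1 : (0:ℝ) < b + c * n^2 := by positivity
    simp only [Set.mem_setOf_eq, Real.norm_eq_abs, abs_of_pos (by positivity : (0:ℝ) < 1/(b + c*(n:ℝ)^2))]
    rw [div_le_iff₀ h1, one_div, one_div]
    have h2 : c⁻¹ * (((n:ℝ)^2)⁻¹) * (b + c*(n:ℝ)^2) = b/(c*(n:ℝ)^2) + 1 := by
      field_simp
      rw [add_div, mul_div_cancel_right₀ _ hn'.ne']
    rw [h2]
    have h3 : 0 ≤ b/(c*(n:ℝ)^2) := by positivity
    linarith





/-- Mittag-Leffler expansion of `coth`. -/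
lemma hasSum_coth (a : ℝ) (ha : a ≠ 0) :
    HasSum (fun n : ℤ => a / (a ^ 2 + (n:ℝ) ^ 2 * π ^ 2))
      (Real.cosh a / Real.sinh a) := by
  have hA : (2 : ℝ) * a ≠ 0 := by simpa using ha
  -- the coefficient function, as a real number
  set cn : ℤ → ℝ := fun n =>
    2 * (2*a) * Real.sinh ((2*a) / 2) / ((2*a) ^ 2 + 4 * π ^ 2 * (n:ℝ) ^ 2) with hcn
  -- the periodized function
  set g : ℝ → ℂ := fun x => (Real.cosh ((2*a) * (x - 1/2)) : ℂ) with hg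
  have hcont : Continuous (AddCircle.liftIco 1 0 g) := by
    apply AddCircle.liftIco_zero_continuous
    · simp only [hg]
      norm_num
    · exact (Complex.continuous_ofReal.comp
        (Real.continuous_cosh.comp (by continuity))).continuousOn
  set G : C(AddCircle (1:ℝ), ℂ) := ⟨AddCircle.liftIco 1 0 g, hcont⟩ with hG
  have hcoeff : ∀ n : ℤ, fourierCoeff (G : AddCircle (1:ℝ) → ℂ) n = ((cn n : ℝ) : ℂ) := by
    intro n
    show fourierCoeff (AddCircle.liftIco 1 0 g) n = _
    rw [fourierCoeff_liftIco_eq]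
    exact fourierCoeff_cosh (2*a) hA n
  have hsum_cn : Summable cn := by
    have h0 := (summable_aux ((2*a)^2) (4*π^2) (by positivity) (by positivity)).mul_left
      (2*(2*a)*Real.sinh ((2*a)/2))
    refine h0.congr fun n => ?_
    rw [hcn]
    simp [mul_one_div, div_eq_mul_inv]
  have hsum_coeff : Summable (fourierCoeff (G : AddCircle (1:ℝ) → ℂ)) := by
    have : Summable (fun n : ℤ => ((cn n : ℝ) : ℂ)) :=
      ⟨_, (hasSum_ofReal).mpr hsum_cn.hasSum⟩
    exact this.congr fun n => (hcoeff n).symm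
  have hpt := has_pointwise_sum_fourier_series_of_summable hsum_coeff ((0:ℝ) : AddCircle (1:ℝ))
  simp_rw [hcoeff] at hpt
  have hG0 : (G : AddCircle (1:ℝ) → ℂ) ((0:ℝ) : AddCircle (1:ℝ)) = ((Real.cosh a : ℝ) : ℂ) := by
    show AddCircle.liftIco 1 0 g ((0:ℝ) : AddCircle (1:ℝ)) = _
    rw [AddCircle.liftIco_coe_apply (by norm_num : (0:ℝ) ∈ Ico (0:ℝ) (0+1))]
    rw [hg]
    norm_num
    congr 1
    ring
  rw [hG0] at hpt
  have hfour : ∀ n : ℤ, ((cn n : ℝ) : ℂ) • fourier n ((0:ℝ) : AddCircle (1:ℝ)) = ((cn n : ℝ) : ℂ) := by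
    intro n
    rw [QuotientAddGroup.mk_zero, fourier_eval_zero, smul_eq_mul, mul_one]
  rw [funext hfour] at hpt
  have hpt2 : HasSum (fun n : ℤ => ((cn n : ℝ) : ℂ)) ((Real.cosh a : ℝ) : ℂ) := hpt
  have hptR : HasSum cn (Real.cosh a) := hasSum_ofReal.mp hpt2
  have hcn' : ∀ n : ℤ, cn n = Real.sinh a * (a / (a^2 + (n:ℝ)^2 * π^2)) := by
    intro n
    rw [hcn]
    have hd : (0:ℝ) < a^2 + (n:ℝ)^2 * π^2 := by positivity
    norm_num
    field_simp
    ring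
  rw [funext hcn'] at hptR
  have hsa : Real.sinh a ≠ 0 := Real.sinh_ne_zero.mpr ha
  have := hptR.mul_left (Real.sinh a)⁻¹
  rw [inv_mul_eq_div] at this
  simpa only [inv_mul_cancel_left₀ hsa] using this

end TanhML

end

end Helpers

/-- Mittag-Leffler expansion of the hyperbolic tangent. -/
theorem tanh_mittag_leffler (z : ℝ) :
    Real.tanh z
      = 8 * z * ∑' n : ℕ, 1 / (4 * z ^ 2 + (2 * ((n : ℝ) + 1) - 1) ^ 2 * π ^ 2) := by
  rcases eq_or_ne z 0 with rfl | hz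
  · simp
  -- main sequence
  set f : ℤ → ℝ := fun n => 4 * z / (4 * z ^ 2 + (n:ℝ) ^ 2 * π ^ 2) with hf
  have hz2 : (2:ℝ) * z ≠ 0 := by simpa using hz
  have h_all : HasSum f (2 * (Real.cosh (2*z) / Real.sinh (2*z))) := by
    have h := (TanhML.hasSum_coth (2*z) hz2).mul_left 2
    have he : (fun n : ℤ => 2 * ((2*z) / ((2*z) ^ 2 + (n:ℝ) ^ 2 * π ^ 2))) = f := by
      funext n
      rw [hf]
      rw [show ((2*z)^2 : ℝ) = 4 * z^2 by ring, mul_div_assoc']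
      congr 1
      ring
    rwa [he] at h
  have h_even : HasSum (fun m : ℤ => f (2*m)) (Real.cosh z / Real.sinh z) := by
    have h := TanhML.hasSum_coth z hz
    have he : (fun m : ℤ => z / (z ^ 2 + (m:ℝ) ^ 2 * π ^ 2)) = fun m : ℤ => f (2*m) := by
      funext m
      rw [hf]
      push_cast
      rw [div_eq_div_iff (by positivity) (by positivity)]
      ring
    rwa [he] at h
  have hinj_even : Function.Injective (fun m : ℤ => 2*m) := fun a b h => by
    dsimp only at h; omega
  have hinj_odd : Function.Injective (fun m : ℤ => 2*m+1) := fun a b h => by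
    dsimp only at h; omega
  have hcompl : (Set.range (fun m : ℤ => 2*m+1))ᶜ = Set.range (fun m : ℤ => 2*m) := by
    ext n
    simp only [Set.mem_compl_iff, Set.mem_range]
    constructor
    · intro h
      rcases Int.even_or_odd n with ⟨k, hk⟩ | ⟨k, hk⟩
      · exact ⟨k, by omega⟩
      · exact absurd ⟨k, by omega⟩ h
    · rintro ⟨k, rfl⟩ ⟨m, hm⟩
      omega
  have h_even_ind : HasSum (Set.indicator (Set.range (fun m : ℤ => 2*m+1))ᶜ f)
      (Real.cosh z / Real.sinh z) := by
    rw [hcompl]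
    exact hasSum_subtype_iff_indicator.mp ((hinj_even.hasSum_range_iff).mpr h_even)
  have hb0 : HasSum (f ∘ ((↑) : ↥(Set.range (fun m : ℤ => 2*m+1))ᶜ → ℤ))
      (Real.cosh z / Real.sinh z) := hasSum_subtype_iff_indicator.mpr h_even_ind
  have hodd_sm : Summable (fun m : ℤ => f (2*m+1)) :=
    h_all.summable.comp_injective hinj_odd
  set B : ℝ := ∑' m : ℤ, f (2*m+1) with hBdef
  have hB : HasSum (fun m : ℤ => f (2*m+1)) B := hodd_sm.hasSum
  have hs_sub : HasSum (f ∘ ((↑) : ↥(Set.range (fun m : ℤ => 2*m+1)) → ℤ)) B :=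
    (hinj_odd.hasSum_range_iff).mpr hB
  have htot : HasSum f (B + Real.cosh z / Real.sinh z) := hs_sub.add_compl hb0
  have hBC : B + Real.cosh z / Real.sinh z = 2 * (Real.cosh (2*z) / Real.sinh (2*z)) :=
    htot.unique h_all
  have htanh : 2 * (Real.cosh (2*z) / Real.sinh (2*z)) - Real.cosh z / Real.sinh z
      = Real.tanh z := by
    rw [Real.tanh_eq_sinh_div_cosh, Real.cosh_two_mul, Real.sinh_two_mul]
    have hsz : Real.sinh z ≠ 0 := Real.sinh_ne_zero.mpr hz
    have hcz : Real.cosh z ≠ 0 := (Real.cosh_pos z).ne'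
    field_simp
    ring
  have hBval : B = Real.tanh z := by linarith
  rw [hBval] at hB
  have hN := hB.nat_add_neg_add_one
  have he2 : (fun n : ℕ => f (2*(n:ℤ)+1) + f (2*(-((n:ℤ)+1))+1))
      = fun n : ℕ => 8 * z / (4 * z ^ 2 + (2*(n:ℝ)+1) ^ 2 * π ^ 2) := by
    funext n
    rw [hf]
    push_cast
    have hd1 : (0:ℝ) < 4 * z ^ 2 + (2*(n:ℝ)+1) ^ 2 * π ^ 2 := by positivity
    have hd2 : (0:ℝ) < 4 * z ^ 2 + (2*(-((n:ℝ)+1))+1) ^ 2 * π ^ 2 := by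
      have : (2*(-((n:ℝ)+1))+1) ^ 2 = (2*(n:ℝ)+1) ^ 2 := by ring
      rw [this]; exact hd1
    rw [div_add_div _ _ (ne_of_gt hd1) (ne_of_gt hd2), div_eq_div_iff (by positivity) (ne_of_gt hd1)]
    ring
  rw [he2] at hN
  calc Real.tanh z = ∑' n : ℕ, 8 * z / (4 * z ^ 2 + (2*(n:ℝ)+1) ^ 2 * π ^ 2) := hN.tsum_eq.symm
    _ = ∑' n : ℕ, 8 * z * (1 / (4 * z ^ 2 + (2 * ((n:ℝ) + 1) - 1) ^ 2 * π ^ 2)) := by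
        refine tsum_congr fun n => ?_
        rw [mul_one_div]
        congr 2
        ring
    _ = 8 * z * ∑' n : ℕ, 1 / (4 * z ^ 2 + (2 * ((n:ℝ) + 1) - 1) ^ 2 * π ^ 2) := tsum_mul_left
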